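/- For f = (y³+x⁷)(y³+x¹⁰) ∈ ℂ[x,y], the Tjurina number τ(f) = dim_ℂ ℂ[[x,y]]/⟨f, ∂f/∂x, ∂f/∂y⟩ equals 59. -/

import Mathlib

noncomputable section

/-- The formal power series ring ℂ[[x,y]]. -/
abbrev R2 := MvPowerSeries (Fin 2) ℂ

/-- Partial derivative of a formal power series in two variables. -/
def pder (i : Fin 2) (f : R2) : R2 :=
  fun d => ((d i : ℕ) + 1 : ℂ) * MvPowerSeries.coeff (d + Finsupp.single i 1) f

/-- The maximal ideal 𝔪 = ⟨x,y⟩ of ℂ[[x,y]]. -/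
def mIdeal : Ideal R2 := Ideal.span {MvPowerSeries.X 0, MvPowerSeries.X 1}

/-- dim_ℂ B/A for ideals A ⊆ B of ℂ[[x,y]]. -/
def qdim (A B : Ideal R2) : ℕ :=
  Module.finrank ℂ ((B.map (Ideal.Quotient.mk A)).restrictScalars ℂ)
/-- f = (y³+x⁷)(y³+x¹⁰) ∈ ℂ[[x,y]]. -/
def fEx : R2 :=
  (MvPowerSeries.X 1 ^ 3 + MvPowerSeries.X 0 ^ 7) *
  (MvPowerSeries.X 1 ^ 3 + MvPowerSeries.X 0 ^ 10)

set_option linter.unnecessarySeqFocus false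

namespace Tj

/-- exponent (a,b) as a Finsupp on Fin 2 -/
def E (a b : ℕ) : Fin 2 →₀ ℕ := Finsupp.single 0 a + Finsupp.single 1 b

@[simp] lemma E_apply0 (a b : ℕ) : E a b 0 = a := by simp [E]
@[simp] lemma E_apply1 (a b : ℕ) : E a b 1 = b := by simp [E]

lemma E_surj (d : Fin 2 →₀ ℕ) : d = E (d 0) (d 1) := by
  ext i
  fin_cases i <;> simp

lemma E_le_E {a b u v : ℕ} : E u v ≤ E a b ↔ u ≤ a ∧ v ≤ b := by
  constructor
  · intro h
    exact ⟨by simpa using h 0, by simpa using h 1⟩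
  · intro ⟨h1, h2⟩ i
    fin_cases i <;> simpa

@[simp] lemma E_sub (a b u v : ℕ) : E a b - E u v = E (a-u) (b-v) := by
  ext i; fin_cases i <;> simp

@[simp] lemma E_add (a b u v : ℕ) : E a b + E u v = E (a+u) (b+v) := by
  ext i; fin_cases i <;> simp

lemma E_inj {a b u v : ℕ} : E a b = E u v ↔ a = u ∧ b = v := by
  constructor
  · intro h
    exact ⟨by rw [← E_apply0 a b, h, E_apply0], by rw [← E_apply1 a b, h, E_apply1]⟩
  · rintro ⟨rfl, rfl⟩; rfl

/-- the monomial x^a y^b -/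
def Mo (a b : ℕ) : R2 := MvPowerSeries.monomial (E a b) 1

/-- coefficient of x^a y^b -/
def c (a b : ℕ) (z : R2) : ℂ := MvPowerSeries.coeff (E a b) z

@[simp] lemma c_add (a b : ℕ) (z w : R2) : c a b (z + w) = c a b z + c a b w := map_add _ _ _
@[simp] lemma c_sub (a b : ℕ) (z w : R2) : c a b (z - w) = c a b z - c a b w := map_sub _ _ _
@[simp] lemma c_smul (a b : ℕ) (s : ℂ) (z : R2) : c a b (s • z) = s * c a b z := by
  simp [c]
@[simp] lemma c_zero (a b : ℕ) : c a b (0 : R2) = 0 := map_zero _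
@[simp] lemma c_neg (a b : ℕ) (z : R2) : c a b (-z) = - c a b z := map_neg _ _

@[simp] lemma c_Mo (a b u v : ℕ) : c a b (Mo u v) = if u = a ∧ v = b then 1 else 0 := by
  rw [c, Mo, MvPowerSeries.coeff_monomial]
  simp only [E_inj]
  congr 1
  simp only [eq_iff_iff]
  constructor <;> (intro h; exact ⟨h.1.symm, h.2.symm⟩)

@[simp] lemma c_Mo_mul (a b u v : ℕ) (p : R2) :
    c a b (Mo u v * p) = if u ≤ a ∧ v ≤ b then c (a-u) (b-v) p else 0 := by
  rw [c, Mo, MvPowerSeries.coeff_monomial_mul]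
  by_cases h : E u v ≤ E a b
  · rw [if_pos h, if_pos (E_le_E.mp h), one_mul, E_sub]; rfl
  · rw [if_neg h, if_neg (fun hc => h (E_le_E.mpr hc))]

@[simp] lemma c_mul_Mo (a b u v : ℕ) (p : R2) :
    c a b (p * Mo u v) = if u ≤ a ∧ v ≤ b then c (a-u) (b-v) p else 0 := by
  rw [mul_comm, c_Mo_mul]

lemma Mo_mul_Mo (a b u v : ℕ) : Mo a b * Mo u v = Mo (a+u) (b+v) := by
  rw [Mo, Mo, Mo, MvPowerSeries.monomial_mul_monomial, E_add, one_mul]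

@[simp] lemma Mo_zero : Mo 0 0 = 1 := by
  rw [Mo]
  have : E 0 0 = 0 := by ext i; fin_cases i <;> simp
  rw [this]
  exact MvPowerSeries.monomial_zero_one ..

lemma X0_eq : (MvPowerSeries.X 0 : R2) = Mo 1 0 := by
  rw [MvPowerSeries.X, Mo]
  have : E 1 0 = Finsupp.single 0 1 := by ext i; fin_cases i <;> simp
  rw [this]

lemma X1_eq : (MvPowerSeries.X 1 : R2) = Mo 0 1 := by
  rw [MvPowerSeries.X, Mo]
  have : E 0 1 = Finsupp.single 1 1 := by ext i; fin_cases i <;> simp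
  rw [this]

lemma X0_pow (n : ℕ) : (MvPowerSeries.X 0 : R2)^n = Mo n 0 := by
  induction n with
  | zero => simp
  | succ k ih => rw [pow_succ, ih, X0_eq, Mo_mul_Mo]

lemma X1_pow (n : ℕ) : (MvPowerSeries.X 1 : R2)^n = Mo 0 n := by
  induction n with
  | zero => simp
  | succ k ih => rw [pow_succ, ih, X1_eq, Mo_mul_Mo]

lemma ext_c {z w : R2} (h : ∀ a b, c a b z = c a b w) : z = w := by
  apply MvPowerSeries.ext
  intro d
  rw [E_surj d]
  exact h (d 0) (d 1)


/-- generator d = 2y⁵ + x⁷y² + x¹⁰y² -/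
def gd : R2 := (2:ℂ) • Mo 0 5 + Mo 7 2 + Mo 10 2
/-- generator e = 7x⁶y³ + 17x¹⁶ -/
def ge : R2 := (7:ℂ) • Mo 6 3 + (17:ℂ) • Mo 16 0

/-- the ideal I that will be shown equal to the Tjurina ideal -/
def I : Ideal R2 := Ideal.span {gd, ge, Mo 7 3, Mo 13 2, Mo 17 0}

lemma fEx_eq : fEx = Mo 0 6 + Mo 7 3 + Mo 10 3 + Mo 17 0 := by
  rw [fEx, X0_pow, X0_pow, X1_pow, add_mul, mul_add, mul_add, Mo_mul_Mo, Mo_mul_Mo,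
    Mo_mul_Mo, Mo_mul_Mo]
  ring_nf

lemma E_add_single0 (a b : ℕ) : E a b + Finsupp.single 0 1 = E (a+1) b := by
  ext i; fin_cases i <;> simp [E]

lemma E_add_single1 (a b : ℕ) : E a b + Finsupp.single 1 1 = E a (b+1) := by
  ext i; fin_cases i <;> simp [E]

lemma c_pder0 (z : R2) (a b : ℕ) : c a b (pder 0 z) = ((a:ℂ)+1) * c (a+1) b z := by
  show pder 0 z (E a b) = _
  rw [pder]
  simp only [E_apply0]
  rw [E_add_single0]
  rfl

lemma c_pder1 (z : R2) (a b : ℕ) : c a b (pder 1 z) = ((b:ℂ)+1) * c a (b+1) z := by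
  show pder 1 z (E a b) = _
  rw [pder]
  simp only [E_apply1]
  rw [E_add_single1]
  rfl

lemma pder_add (i : Fin 2) (z w : R2) : pder i (z + w) = pder i z + pder i w := by
  funext n
  show _ * (MvPowerSeries.coeff _ (z + w)) = _
  rw [map_add, mul_add]
  rfl

lemma pder0_Mo (u v : ℕ) : pder 0 (Mo (u+1) v) = ((u:ℂ)+1) • Mo u v := by
  apply ext_c
  intro a b
  rw [c_pder0]
  simp only [c_Mo, c_smul]
  split_ifs with h1 h2 h2
  · obtain ⟨h, rfl⟩ := h1
    obtain rfl : u = a := by omega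
    ring
  · exact absurd ⟨by omega, h1.2⟩ h2
  · exact absurd ⟨by omega, h2.2⟩ h1
  · ring

lemma pder0_Mo0 (v : ℕ) : pder 0 (Mo 0 v) = 0 := by
  apply ext_c
  intro a b
  rw [c_pder0, c_Mo, c_zero, if_neg (by omega : ¬((0:ℕ) = a + 1 ∧ v = b)), mul_zero]

lemma pder1_Mo (u v : ℕ) : pder 1 (Mo u (v+1)) = ((v:ℂ)+1) • Mo u v := by
  apply ext_c
  intro a b
  rw [c_pder1]
  simp only [c_Mo, c_smul]
  split_ifs with h1 h2 h2
  · obtain ⟨rfl, h⟩ := h1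
    obtain rfl : v = b := by omega
    ring
  · exact absurd ⟨h1.1, by omega⟩ h2
  · exact absurd ⟨h2.1, by omega⟩ h1
  · ring

lemma pder1_Mo0 (u : ℕ) : pder 1 (Mo u 0) = 0 := by
  apply ext_c
  intro a b
  rw [c_pder1, c_Mo, c_zero, if_neg (by omega : ¬(u = a ∧ (0:ℕ) = b + 1)), mul_zero]

lemma pder0_fEx : pder 0 fEx = (7:ℂ) • Mo 6 3 + (10:ℂ) • Mo 9 3 + (17:ℂ) • Mo 16 0 := by
  rw [fEx_eq, pder_add, pder_add, pder_add]
  rw [pder0_Mo0, show (Mo 7 3 : R2) = Mo (6+1) 3 from rfl, pder0_Mo,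
    show (Mo 10 3 : R2) = Mo (9+1) 3 from rfl, pder0_Mo,
    show (Mo 17 0 : R2) = Mo (16+1) 0 from rfl, pder0_Mo]
  push_cast
  norm_num

lemma pder1_fEx : pder 1 fEx = (6:ℂ) • Mo 0 5 + (3:ℂ) • Mo 7 2 + (3:ℂ) • Mo 10 2 := by
  rw [fEx_eq, pder_add, pder_add, pder_add]
  rw [show (Mo 0 6 : R2) = Mo 0 (5+1) from rfl, pder1_Mo,
    show (Mo 7 3 : R2) = Mo 7 (2+1) from rfl, pder1_Mo,
    show (Mo 10 3 : R2) = Mo 10 (2+1) from rfl, pder1_Mo,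
    pder1_Mo0]
  push_cast
  norm_num

/-- the Tjurina ideal of fEx -/
def J : Ideal R2 := Ideal.span {fEx, pder 0 fEx, pder 1 fEx}

lemma c00 (z : R2) : MvPowerSeries.constantCoeff z = c 0 0 z := by
  have h0 : E 0 0 = 0 := by ext i; fin_cases i <;> simp
  rw [c, h0, MvPowerSeries.coeff_zero_eq_constantCoeff_apply]

@[simp] lemma c_one (a b : ℕ) : c a b (1 : R2) = if a = 0 ∧ b = 0 then 1 else 0 := by
  rw [← Mo_zero, c_Mo]
  congr 1
  simp [eq_comm]

lemma smulC_mem {P : Ideal R2} {z : R2} (s : ℂ) (h : z ∈ P) : s • z ∈ P := by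
  rw [MvPowerSeries.smul_eq_C_mul]
  exact Ideal.mul_mem_left _ _ h

lemma mem_of_smul_mem {P : Ideal R2} {z : R2} {s : ℂ} (hs : s ≠ 0) (h : s • z ∈ P) :
    z ∈ P := by
  have : z = (MvPowerSeries.C s⁻¹ : R2) * (s • z) := by
    rw [MvPowerSeries.smul_eq_C_mul, ← mul_assoc, ← map_mul, inv_mul_cancel₀ hs, map_one, one_mul]
  rw [this]
  exact Ideal.mul_mem_left _ _ h

lemma mem_of_mul_unit_mem {P : Ideal R2} {z u : R2} {s : ℂ} (hs : s ≠ 0)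
    (hu : MvPowerSeries.constantCoeff u = s) (h : z * u ∈ P) : z ∈ P := by
  have h1 : u * MvPowerSeries.invOfUnit u (Units.mk0 s hs) = 1 :=
    MvPowerSeries.mul_invOfUnit u (Units.mk0 s hs) hu
  have : z = (z * u) * MvPowerSeries.invOfUnit u (Units.mk0 s hs) := by
    rw [mul_assoc, h1, mul_one]
  rw [this]
  exact Ideal.mul_mem_right _ _ h

lemma fEx_mem_J : fEx ∈ J := Ideal.subset_span (by simp)
lemma p0_mem_J : pder 0 fEx ∈ J := Ideal.subset_span (by simp)
lemma p1_mem_J : pder 1 fEx ∈ J := Ideal.subset_span (by simp)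

lemma gd_mem_J : gd ∈ J := by
  apply mem_of_smul_mem (show (3:ℂ) ≠ 0 by norm_num)
  have : (3:ℂ) • gd = pder 1 fEx := by
    rw [pder1_fEx, gd]
    module
  rw [this]
  exact p1_mem_J

lemma hp_mem_J : Mo 0 6 + Mo 7 3 ∈ J := by
  apply mem_of_smul_mem (show (9:ℂ) ≠ 0 by norm_num)
  have : (9:ℂ) • (Mo 0 6 + Mo 7 3) =
      (51:ℂ) • fEx - Mo 1 0 * ((3:ℂ) • pder 0 fEx) - Mo 0 1 * ((7:ℂ) • pder 1 fEx) := by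
    rw [pder1_fEx, pder0_fEx, fEx_eq]
    simp only [smul_add, mul_add, mul_smul_comm, Mo_mul_Mo, smul_smul]
    module
  rw [this]
  exact sub_mem (sub_mem (smulC_mem _ fEx_mem_J)
    (Ideal.mul_mem_left _ _ (smulC_mem _ p0_mem_J)))
    (Ideal.mul_mem_left _ _ (smulC_mem _ p1_mem_J))

lemma hq_mem_J : Mo 0 6 + Mo 10 3 ∈ J := by
  apply mem_of_smul_mem (show (9:ℂ) ≠ 0 by norm_num)
  have : (9:ℂ) • (Mo 0 6 + Mo 10 3) =
      Mo 1 0 * ((3:ℂ) • pder 0 fEx) + Mo 0 1 * ((10:ℂ) • pder 1 fEx) - (51:ℂ) • fEx := by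
    rw [pder1_fEx, pder0_fEx, fEx_eq]
    simp only [smul_add, mul_add, mul_smul_comm, Mo_mul_Mo, smul_smul]
    module
  rw [this]
  exact sub_mem (add_mem (Ideal.mul_mem_left _ _ (smulC_mem _ p0_mem_J))
    (Ideal.mul_mem_left _ _ (smulC_mem _ p1_mem_J)))
    (smulC_mem _ fEx_mem_J)

lemma Mo73_mem_J : Mo 7 3 ∈ J := by
  apply mem_of_mul_unit_mem (show (1:ℂ) ≠ 0 by norm_num)
    (u := (1:R2) - Mo 3 0) ?_ ?_
  · rw [c00]
    simp only [c_sub, c_one, c_Mo]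
    norm_num
  · have : Mo 7 3 * ((1:R2) - Mo 3 0) = (Mo 0 6 + Mo 7 3) - (Mo 0 6 + Mo 10 3) := by
      rw [mul_sub, mul_one, Mo_mul_Mo]
      ring
    rw [this]
    exact sub_mem hp_mem_J hq_mem_J

lemma Mo06_mem_J : Mo 0 6 ∈ J := by
  have : Mo 0 6 = (Mo 0 6 + Mo 7 3) - Mo 7 3 := by ring
  rw [this]
  exact sub_mem hp_mem_J Mo73_mem_J

lemma Mo170_mem_J : Mo 17 0 ∈ J := by
  have : Mo 17 0 = fEx - Mo 0 6 - Mo 7 3 - Mo 3 0 * Mo 7 3 := by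
    rw [fEx_eq, Mo_mul_Mo]
    ring
  rw [this]
  exact sub_mem (sub_mem (sub_mem fEx_mem_J Mo06_mem_J) Mo73_mem_J)
    (Ideal.mul_mem_left _ _ Mo73_mem_J)

lemma ge_mem_J : ge ∈ J := by
  have : ge = pder 0 fEx - Mo 2 0 * ((10:ℂ) • Mo 7 3) := by
    rw [pder0_fEx, ge, mul_smul_comm, Mo_mul_Mo]
    module
  rw [this]
  exact sub_mem p0_mem_J (Ideal.mul_mem_left _ _ (smulC_mem _ Mo73_mem_J))

lemma Mo132_mem_J : Mo 13 2 ∈ J := by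
  apply mem_of_mul_unit_mem (show (-7:ℂ) ≠ 0 by norm_num)
    (u := (27:ℂ) • Mo 3 0 - (7:ℂ) • (1:R2)) ?_ ?_
  · rw [c00]
    simp only [c_sub, c_smul, c_one, c_Mo]
    norm_num
  · have : Mo 13 2 * ((27:ℂ) • Mo 3 0 - (7:ℂ) • (1:R2)) =
        Mo 0 2 * ((2:ℂ) • ge) - Mo 6 0 * ((7:ℂ) • gd) := by
      rw [ge, gd]
      simp only [mul_sub, mul_add, smul_add, mul_smul_comm, smul_smul, Mo_mul_Mo, mul_one]
      norm_num
      module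
    rw [this]
    exact sub_mem (Ideal.mul_mem_left _ _ (smulC_mem _ ge_mem_J))
      (Ideal.mul_mem_left _ _ (smulC_mem _ gd_mem_J))

lemma gd_mem_I : gd ∈ I := Ideal.subset_span (by simp [Set.mem_insert_iff])
lemma ge_mem_I : ge ∈ I := Ideal.subset_span (by simp [Set.mem_insert_iff])
lemma Mo73_mem_I : Mo 7 3 ∈ I := Ideal.subset_span (by simp [Set.mem_insert_iff])
lemma Mo132_mem_I : Mo 13 2 ∈ I := Ideal.subset_span (by simp [Set.mem_insert_iff])
lemma Mo170_mem_I : Mo 17 0 ∈ I := Ideal.subset_span (by simp [Set.mem_insert_iff])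

lemma Mo06_mem_I : Mo 0 6 ∈ I := by
  apply mem_of_smul_mem (show (2:ℂ) ≠ 0 by norm_num)
  have : (2:ℂ) • Mo 0 6 = Mo 0 1 * gd - Mo 7 3 - Mo 3 0 * Mo 7 3 := by
    rw [gd]
    simp only [mul_add, mul_smul_comm, Mo_mul_Mo]
    module
  rw [this]
  exact sub_mem (sub_mem (Ideal.mul_mem_left _ _ gd_mem_I) Mo73_mem_I)
    (Ideal.mul_mem_left _ _ Mo73_mem_I)

lemma J_eq_I : J = I := by
  apply le_antisymm
  · rw [J, Ideal.span_le]
    rintro z hz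
    simp only [Set.mem_insert_iff, Set.mem_singleton_iff] at hz
    rcases hz with rfl | rfl | rfl
    · have : fEx = Mo 0 6 + Mo 7 3 + Mo 3 0 * Mo 7 3 + Mo 17 0 := by
        rw [fEx_eq, Mo_mul_Mo]
      rw [this]
      exact add_mem (add_mem (add_mem Mo06_mem_I Mo73_mem_I)
        (Ideal.mul_mem_left _ _ Mo73_mem_I)) Mo170_mem_I
    · have : pder 0 fEx = ge + Mo 2 0 * ((10:ℂ) • Mo 7 3) := by
        rw [pder0_fEx, ge, mul_smul_comm, Mo_mul_Mo]
        module
      rw [this]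
      exact add_mem ge_mem_I (Ideal.mul_mem_left _ _ (smulC_mem _ Mo73_mem_I))
    · have : pder 1 fEx = (3:ℂ) • gd := by
        rw [pder1_fEx, gd]
        module
      rw [this]
      exact smulC_mem _ gd_mem_I
  · rw [I, Ideal.span_le]
    rintro z hz
    simp only [Set.mem_insert_iff, Set.mem_singleton_iff] at hz
    rcases hz with rfl | rfl | rfl | rfl | rfl
    · exact gd_mem_J
    · exact ge_mem_J
    · exact Mo73_mem_J
    · exact Mo132_mem_J
    · exact Mo170_mem_J

lemma memI_rep {z : R2} (h : z ∈ I) :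
    ∃ p1 p2 p3 p4 p5 : R2,
      z = p1 * gd + p2 * ge + p3 * Mo 7 3 + p4 * Mo 13 2 + p5 * Mo 17 0 := by
  induction h using Submodule.span_induction with
  | mem x hx =>
    simp only [Set.mem_insert_iff, Set.mem_singleton_iff] at hx
    rcases hx with rfl | rfl | rfl | rfl | rfl
    · exact ⟨1, 0, 0, 0, 0, by ring⟩
    · exact ⟨0, 1, 0, 0, 0, by ring⟩
    · exact ⟨0, 0, 1, 0, 0, by ring⟩
    · exact ⟨0, 0, 0, 1, 0, by ring⟩
    · exact ⟨0, 0, 0, 0, 1, by ring⟩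
  | zero => exact ⟨0, 0, 0, 0, 0, by ring⟩
  | add x y _ _ ihx ihy =>
    obtain ⟨a1, a2, a3, a4, a5, rfl⟩ := ihx
    obtain ⟨b1, b2, b3, b4, b5, rfl⟩ := ihy
    exact ⟨a1+b1, a2+b2, a3+b3, a4+b4, a5+b5, by ring⟩
  | smul r x _ ihx =>
    obtain ⟨a1, a2, a3, a4, a5, rfl⟩ := ihx
    exact ⟨r*a1, r*a2, r*a3, r*a4, r*a5, by rw [smul_eq_mul]; ring⟩

lemma c_mul_gd (p : R2) (a b : ℕ) :
    c a b (p * gd) = (if 5 ≤ b then 2 * c a (b-5) p else 0)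
      + (if 7 ≤ a ∧ 2 ≤ b then c (a-7) (b-2) p else 0)
      + (if 10 ≤ a ∧ 2 ≤ b then c (a-10) (b-2) p else 0) := by
  rw [gd, mul_add, mul_add, mul_smul_comm]
  simp only [c_add, c_smul, c_mul_Mo, Nat.zero_le, true_and, and_true, Nat.sub_zero,
    mul_ite, mul_zero]

lemma c_mul_ge (p : R2) (a b : ℕ) :
    c a b (p * ge) = (if 6 ≤ a ∧ 3 ≤ b then 7 * c (a-6) (b-3) p else 0)
      + (if 16 ≤ a then 17 * c (a-16) b p else 0) := by
  rw [ge, mul_add, mul_smul_comm, mul_smul_comm]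
  simp only [c_add, c_smul, c_mul_Mo, Nat.zero_le, true_and, and_true, Nat.sub_zero,
    mul_ite, mul_zero]

lemma cI_triv {z : R2} (h : z ∈ I) (a b : ℕ)
    (hab : (b ≤ 1 ∧ a ≤ 15) ∨ (b = 2 ∧ a ≤ 6) ∨ ((b = 3 ∨ b = 4) ∧ a ≤ 5)) :
    c a b z = 0 := by
  obtain ⟨p1, p2, p3, p4, p5, rfl⟩ := memI_rep h
  have h1 : ¬ (5 ≤ b) := by omega
  have h2 : ¬ (7 ≤ a ∧ 2 ≤ b) := by omega
  have h3 : ¬ (10 ≤ a ∧ 2 ≤ b) := by omega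
  have h4 : ¬ (6 ≤ a ∧ 3 ≤ b) := by omega
  have h5 : ¬ (16 ≤ a) := by omega
  have h6 : ¬ (7 ≤ a ∧ 3 ≤ b) := by omega
  have h7 : ¬ (13 ≤ a ∧ 2 ≤ b) := by omega
  have h8 : ¬ (17 ≤ a ∧ 0 ≤ b) := by omega
  simp only [c_add, c_mul_gd, c_mul_ge, c_mul_Mo, h1, h2, h3, h4, h5, h6, h7, h8,
    if_false, add_zero, zero_add]

/-- coefficient of x^t y^5 of an element of I in represented form -/
lemma aux_c5 (p1 p2 p3 p4 p5 : R2) (t : ℕ) (ht : t ≤ 5) :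
    c t 5 (p1 * gd + p2 * ge + p3 * Mo 7 3 + p4 * Mo 13 2 + p5 * Mo 17 0)
      = 2 * c t 0 p1 := by
  have h7 : ¬ (7 ≤ t) := by omega
  have h10 : ¬ (10 ≤ t) := by omega
  have h6 : ¬ (6 ≤ t) := by omega
  have h16 : ¬ (16 ≤ t) := by omega
  have h13 : ¬ (13 ≤ t) := by omega
  have h17 : ¬ (17 ≤ t) := by omega
  simp only [c_add, c_mul_gd, c_mul_ge, c_mul_Mo, h7, h10, h6, h16, h13, h17,
    Nat.zero_le, true_and, and_true, false_and, and_false, if_false, if_true,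
    add_zero, zero_add]
  norm_num

lemma cI_S1 {z : R2} (h : z ∈ I) (a : ℕ) (h7 : 7 ≤ a) (h12 : a ≤ 12) :
    c a 2 z = (1/2) * c (a-7) 5 z + (if 10 ≤ a then (1/2) * c (a-10) 5 z else 0) := by
  obtain ⟨p1, p2, p3, p4, p5, rfl⟩ := memI_rep h
  rw [aux_c5 _ _ _ _ _ _ (by omega)]
  have h16 : ¬ (16 ≤ a) := by omega
  have h13 : ¬ (13 ≤ a) := by omega
  have h17 : ¬ (17 ≤ a) := by omega
  by_cases h10 : 10 ≤ a
  · rw [if_pos h10, aux_c5 _ _ _ _ _ _ (by omega)]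
    simp only [c_add, c_mul_gd, c_mul_ge, c_mul_Mo, h7, h10, h16, h13, h17,
      Nat.zero_le, true_and, and_true, false_and, and_false, if_false, if_true,
      add_zero, zero_add]
    norm_num
    ring
  · rw [if_neg h10]
    simp only [c_add, c_mul_gd, c_mul_ge, c_mul_Mo, h7, h10, h16, h13, h17,
      Nat.zero_le, true_and, and_true, false_and, and_false, if_false, if_true,
      add_zero, zero_add]
    norm_num
    ring

lemma cI_S2 {z : R2} (h : z ∈ I) : c 16 0 z = (17/7) * c 6 3 z := by
  obtain ⟨p1, p2, p3, p4, p5, rfl⟩ := memI_rep h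
  simp only [c_add, c_mul_gd, c_mul_ge, c_mul_Mo]
  norm_num
  ring

lemma cI_S3 {z : R2} (h : z ∈ I) : c 16 1 z = (17/7) * c 6 4 z := by
  obtain ⟨p1, p2, p3, p4, p5, rfl⟩ := memI_rep h
  simp only [c_add, c_mul_gd, c_mul_ge, c_mul_Mo]
  norm_num
  ring

lemma Mo65_mem_I : Mo 6 5 ∈ I := by
  apply mem_of_smul_mem (show (2:ℂ) ≠ 0 by norm_num)
  have : (2:ℂ) • Mo 6 5 = Mo 6 0 * gd - Mo 13 2 - Mo 3 0 * Mo 13 2 := by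
    rw [gd]
    simp only [mul_add, mul_smul_comm, Mo_mul_Mo]
    module
  rw [this]
  exact sub_mem (sub_mem (Ideal.mul_mem_left _ _ gd_mem_I) Mo132_mem_I)
    (Ideal.mul_mem_left _ _ Mo132_mem_I)

lemma kill_step (u v : ℕ) (Q : ℕ → ℕ → Prop) [∀ m n : ℕ, Decidable (Q m n)]
    (hMo : Mo u v ∈ I) (z : R2) :
    ∃ w ∈ I, (∀ a b, u ≤ a → v ≤ b → Q (a-u) (b-v) → c a b (z - w) = 0) ∧
      (∀ a b, ¬(u ≤ a ∧ v ≤ b ∧ Q (a-u) (b-v)) → c a b (z - w) = c a b z) := by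
  set S : R2 := fun dd => if Q (dd 0) (dd 1) then c (dd 0 + u) (dd 1 + v) z else 0 with hS
  have key : ∀ a b, c a b (Mo u v * S)
      = if u ≤ a ∧ v ≤ b ∧ Q (a-u) (b-v) then c a b z else 0 := by
    intro a b
    rw [c_Mo_mul]
    by_cases h : u ≤ a ∧ v ≤ b
    · rw [if_pos h]
      have : c (a-u) (b-v) S
          = if Q ((E (a-u) (b-v)) 0) ((E (a-u) (b-v)) 1)
            then c ((E (a-u) (b-v)) 0 + u) ((E (a-u) (b-v)) 1 + v) z else 0 := rfl
      rw [this, E_apply0, E_apply1]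
      by_cases hq : Q (a-u) (b-v)
      · rw [if_pos hq, if_pos ⟨h.1, h.2, hq⟩]
        congr 1 <;> omega
      · rw [if_neg hq, if_neg (by tauto)]
    · rw [if_neg h, if_neg (by tauto)]
  refine ⟨Mo u v * S, Ideal.mul_mem_right _ _ hMo, ?_, ?_⟩
  · intro a b ha hb hq
    rw [c_sub, key, if_pos ⟨ha, hb, hq⟩, sub_self]
  · intro a b h
    rw [c_sub, key, if_neg h, sub_zero]

lemma c_gd (a b : ℕ) : c a b gd = (if 0 = a ∧ 5 = b then 2 else 0)
    + (if 7 = a ∧ 2 = b then 1 else 0) + (if 10 = a ∧ 2 = b then 1 else 0) := by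
  rw [gd]
  simp only [c_add, c_smul, c_Mo, mul_ite, mul_one, mul_zero]

lemma c_ge (a b : ℕ) : c a b ge = (if 6 = a ∧ 3 = b then 7 else 0)
    + (if 16 = a ∧ 0 = b then 17 else 0) := by
  rw [ge]
  simp only [c_add, c_smul, c_Mo, mul_ite, mul_one, mul_zero]

lemma step3 (z : R2) :
    ∃ w ∈ I, (∀ a, a ≤ 5 → c a 5 (z - w) = 0) ∧
      (∀ a b, ¬(b = 5 ∧ a ≤ 5) → b ≠ 2 → c a b (z - w) = c a b z) := by
  refine ⟨(c 0 5 z/2) • (Mo 0 0 * gd) + (c 1 5 z/2) • (Mo 1 0 * gd)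
    + (c 2 5 z/2) • (Mo 2 0 * gd) + (c 3 5 z/2) • (Mo 3 0 * gd)
    + (c 4 5 z/2) • (Mo 4 0 * gd) + (c 5 5 z/2) • (Mo 5 0 * gd), ?_, ?_, ?_⟩
  · refine add_mem (add_mem (add_mem (add_mem (add_mem
      (smulC_mem _ (Ideal.mul_mem_left _ _ gd_mem_I))
      (smulC_mem _ (Ideal.mul_mem_left _ _ gd_mem_I)))
      (smulC_mem _ (Ideal.mul_mem_left _ _ gd_mem_I)))
      (smulC_mem _ (Ideal.mul_mem_left _ _ gd_mem_I)))
      (smulC_mem _ (Ideal.mul_mem_left _ _ gd_mem_I)))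
      (smulC_mem _ (Ideal.mul_mem_left _ _ gd_mem_I))
  · intro a ha
    interval_cases a <;>
      simp only [c_sub, c_add, c_smul, c_Mo_mul, c_gd] <;> norm_num
  · intro a b hb5 hb2
    have e2 : ¬ (2 = b) := by omega
    simp only [c_sub, c_add, c_smul, c_Mo_mul, c_gd, e2, and_false, if_false, add_zero,
      Nat.sub_zero, Nat.zero_le, true_and]
    by_cases h5 : b = 5
    · subst h5
      have ha : 6 ≤ a := by omega
      have k0 : ¬ ((0:ℕ) = a) := by omega
      have k1 : ¬ ((0:ℕ) = a - 1) := by omega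
      have k2 : ¬ ((0:ℕ) = a - 2) := by omega
      have k3 : ¬ ((0:ℕ) = a - 3) := by omega
      have k4 : ¬ ((0:ℕ) = a - 4) := by omega
      have k5 : ¬ ((0:ℕ) = a - 5) := by omega
      simp only [k0, k1, k2, k3, k4, k5, and_true, true_and, false_and, and_false,
        if_false, if_true, add_zero, zero_add, mul_zero, ite_self, sub_zero]
    · have e5 : ¬ (5 = b) := by omega
      simp only [e5, and_false, if_false, add_zero, zero_add, mul_zero, ite_self, sub_zero]

lemma step6 (z : R2) :
    ∃ w ∈ I, (c 6 3 (z - w) = 0) ∧ (c 6 4 (z - w) = 0) ∧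
      (∀ a b, ¬(a = 6 ∧ b = 3) → ¬(a = 6 ∧ b = 4) → ¬(a = 16 ∧ b = 0) →
        ¬(a = 16 ∧ b = 1) → c a b (z - w) = c a b z) := by
  refine ⟨(c 6 3 z/7) • (Mo 0 0 * ge) + (c 6 4 z/7) • (Mo 0 1 * ge), ?_, ?_, ?_, ?_⟩
  · exact add_mem (smulC_mem _ (Ideal.mul_mem_left _ _ ge_mem_I))
      (smulC_mem _ (Ideal.mul_mem_left _ _ ge_mem_I))
  · simp only [c_sub, c_add, c_smul, c_Mo_mul, c_ge] <;> norm_num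
  · simp only [c_sub, c_add, c_smul, c_Mo_mul, c_ge] <;> norm_num
  · intro a b h1 h2 h3 h4
    simp only [c_sub, c_add, c_smul, c_Mo_mul, c_ge, Nat.sub_zero, Nat.zero_le, true_and]
    have k1 : ¬ (6 = a ∧ 3 = b) := by omega
    have k2 : ¬ (16 = a ∧ 0 = b) := by omega
    by_cases hb : 1 ≤ b
    · have k3 : ¬ (6 = a ∧ 3 = b - 1) := by omega
      have k4 : ¬ (16 = a ∧ 0 = b - 1) := by omega
      simp only [hb, if_true, k1, k2, k3, k4, if_false, ite_self, add_zero, mul_zero,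
        sub_zero]
    · simp only [hb, if_false, k1, k2, ite_self, add_zero, mul_zero, sub_zero]

/-- Every power series is, modulo I, supported on the 59 basis monomials. -/
lemma reduce (z : R2) : ∃ w ∈ I, ∀ a b : ℕ,
    (5 ≤ b ∨ ((b = 3 ∨ b = 4) ∧ 6 ≤ a) ∨ (b = 2 ∧ 13 ≤ a) ∨ (b ≤ 1 ∧ 17 ≤ a)) →
    c a b (z - w) = 0 := by
  obtain ⟨w1, hw1I, h1k, h1u⟩ := kill_step 0 6 (fun _ _ => True) Mo06_mem_I z
  obtain ⟨w2, hw2I, h2k, h2u⟩ := kill_step 6 5 (fun _ q => q = 0) Mo65_mem_I (z - w1)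
  obtain ⟨w3, hw3I, h3k, h3u⟩ := step3 (z - w1 - w2)
  obtain ⟨w4, hw4I, h4k, h4u⟩ := kill_step 13 2 (fun _ q => q = 0) Mo132_mem_I
    (z - w1 - w2 - w3)
  obtain ⟨w5, hw5I, h5k, h5u⟩ := kill_step 7 3 (fun _ q => q ≤ 1) Mo73_mem_I
    (z - w1 - w2 - w3 - w4)
  obtain ⟨w6, hw6I, h6k3, h6k4, h6u⟩ := step6 (z - w1 - w2 - w3 - w4 - w5)
  obtain ⟨w7, hw7I, h7k, h7u⟩ := kill_step 17 0 (fun _ q => q ≤ 1) Mo170_mem_I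
    (z - w1 - w2 - w3 - w4 - w5 - w6)
  refine ⟨w1 + w2 + w3 + w4 + w5 + w6 + w7,
    add_mem (add_mem (add_mem (add_mem (add_mem (add_mem hw1I hw2I) hw3I) hw4I) hw5I)
      hw6I) hw7I, ?_⟩
  intro a b hab
  have e7 : z - (w1 + w2 + w3 + w4 + w5 + w6 + w7)
      = z - w1 - w2 - w3 - w4 - w5 - w6 - w7 := by ring
  rw [e7]
  -- case analysis on the region
  rcases hab with hb6 | h34 | h2 | h01
  · -- b ≥ 5
    by_cases hb : 6 ≤ b
    · -- b ≥ 6 : killed in step 1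
      rw [h7u a b (by omega), h6u a b (by omega) (by omega) (by omega) (by omega),
        h5u a b (by omega), h4u a b (by omega), h3u a b (by omega) (by omega),
        h2u a b (by omega)]
      exact h1k a b (by omega) (by omega) trivial
    · -- b = 5
      have hb5 : b = 5 := by omega
      subst hb5
      by_cases ha : a ≤ 5
      · rw [h7u a 5 (by omega), h6u a 5 (by omega) (by omega) (by omega) (by omega),
          h5u a 5 (by omega), h4u a 5 (by omega)]
        exact h3k a ha
      · rw [h7u a 5 (by omega), h6u a 5 (by omega) (by omega) (by omega) (by omega),
          h5u a 5 (by omega), h4u a 5 (by omega), h3u a 5 (by omega) (by omega)]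
        exact h2k a 5 (by omega) (by omega) (by omega)
  · -- b ∈ {3,4}, a ≥ 6
    by_cases ha : 7 ≤ a
    · rw [h7u a b (by omega), h6u a b (by omega) (by omega) (by omega) (by omega)]
      exact h5k a b (by omega) (by omega) (by omega)
    · have ha6 : a = 6 := by omega
      subst ha6
      rcases h34.1 with rfl | rfl
      · rw [h7u 6 3 (by omega)]
        exact h6k3
      · rw [h7u 6 4 (by omega)]
        exact h6k4
  · -- b = 2, a ≥ 13
    obtain ⟨rfl, ha⟩ := h2
    rw [h7u a 2 (by omega), h6u a 2 (by omega) (by omega) (by omega) (by omega),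
      h5u a 2 (by omega)]
    exact h4k a 2 (by omega) (by omega) (by omega)
  · -- b ≤ 1, a ≥ 17
    exact h7k a b (by omega) (by omega) (by omega)

/-- the 59 basis exponents -/
def Bset : Finset (ℕ × ℕ) :=
  (Finset.range 17 ×ˢ Finset.range 5).filter
    (fun p => (p.2 ≤ 1 ∧ p.1 ≤ 16) ∨ (p.2 = 2 ∧ p.1 ≤ 12) ∨ ((p.2 = 3 ∨ p.2 = 4) ∧ p.1 ≤ 5))

lemma mem_Bset {a b : ℕ} : (a, b) ∈ Bset ↔
    ((b ≤ 1 ∧ a ≤ 16) ∨ (b = 2 ∧ a ≤ 12) ∨ ((b = 3 ∨ b = 4) ∧ a ≤ 5)) := by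
  simp only [Bset, Finset.mem_filter, Finset.mem_product, Finset.mem_range]
  omega

lemma card_Bset : Bset.card = 59 := by decide

lemma c_finsum {α : Type*} (s : Finset α) (f : α → R2) (a b : ℕ) :
    c a b (∑ p ∈ s, f p) = ∑ p ∈ s, c a b (f p) :=
  map_sum (MvPowerSeries.coeff (E a b)) f s

lemma c_sum (s : Finset (ℕ × ℕ)) (co : ℕ × ℕ → ℂ) (a b : ℕ) :
    c a b (∑ p ∈ s, co p • Mo p.1 p.2) = if (a, b) ∈ s then co (a, b) else 0 := by
  rw [c_finsum]
  have key : ∀ p ∈ s, c a b (co p • Mo p.1 p.2) = if p = (a, b) then co p else 0 := by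
    intro p _
    rw [c_smul, c_Mo]
    by_cases h : p = (a, b)
    · subst h; simp
    · rw [if_neg (fun hc => h (Prod.ext hc.1 hc.2)), if_neg h, mul_zero]
  rw [Finset.sum_congr rfl key, Finset.sum_ite_eq' s (a, b) co]

lemma sum_basis (z : R2) (hvan : ∀ a b : ℕ,
    (5 ≤ b ∨ ((b = 3 ∨ b = 4) ∧ 6 ≤ a) ∨ (b = 2 ∧ 13 ≤ a) ∨ (b ≤ 1 ∧ 17 ≤ a)) →
    c a b z = 0) :
    z = ∑ p ∈ Bset, (c p.1 p.2 z) • Mo p.1 p.2 := by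
  apply ext_c
  intro a b
  rw [c_sum]
  by_cases h : (a, b) ∈ Bset
  · rw [if_pos h]
  · rw [if_neg h]
    rw [mem_Bset] at h
    exact hvan a b (by omega)

lemma injective_core (co : ℕ × ℕ → ℂ)
    (h : (∑ p ∈ Bset, co p • Mo p.1 p.2) ∈ I) :
    ∀ p ∈ Bset, co p = 0 := by
  set zz := ∑ p ∈ Bset, co p • Mo p.1 p.2 with hzz
  have hc : ∀ a b, c a b zz = if (a, b) ∈ Bset then co (a, b) else 0 :=
    fun a b => c_sum Bset co a b
  rintro ⟨a, b⟩ hp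
  rw [mem_Bset] at hp
  have hco : co (a, b) = c a b zz := by rw [hc, if_pos (mem_Bset.mpr hp)]
  -- case analysis
  rcases Nat.lt_or_ge a 16 with ha16 | ha16
  · by_cases htriv : (b ≤ 1 ∧ a ≤ 15) ∨ (b = 2 ∧ a ≤ 6) ∨ ((b = 3 ∨ b = 4) ∧ a ≤ 5)
    · rw [hco]; exact cI_triv h a b htriv
    · -- must be b = 2, 7 ≤ a ≤ 12
      have hb2 : b = 2 ∧ 7 ≤ a ∧ a ≤ 12 := by omega
      obtain ⟨rfl, h7, h12⟩ := hb2
      rw [hco, cI_S1 h a h7 h12]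
      have z1 : c (a-7) 5 zz = 0 := by
        rw [hc, if_neg (by rw [mem_Bset]; omega)]
      have z2 : c (a-10) 5 zz = 0 := by
        rw [hc, if_neg (by rw [mem_Bset]; omega)]
      rw [z1, z2]
      simp
  · -- a = 16, b ≤ 1
    have ha : a = 16 := by omega
    subst ha
    have hb : b = 0 ∨ b = 1 := by omega
    rcases hb with rfl | rfl
    · rw [hco, cI_S2 h, hc, if_neg (by rw [mem_Bset]; omega), mul_zero]
    · rw [hco, cI_S3 h, hc, if_neg (by rw [mem_Bset]; omega), mul_zero]

/-- the ℂ-linear map from coefficient tuples to the quotient ring -/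
def L0 : (↥Bset → ℂ) →ₗ[ℂ] R2 where
  toFun := fun co => ∑ p ∈ Bset.attach, co p • Mo p.1.1 p.1.2
  map_add' := by
    intro x y
    simp [add_smul, Finset.sum_add_distrib]
  map_smul' := by
    intro m x
    simp [smul_smul, Finset.smul_sum]

def Lq : (↥Bset → ℂ) →ₗ[ℂ] (R2 ⧸ I) :=
  (Ideal.Quotient.mkₐ ℂ I).toLinearMap ∘ₗ L0

lemma Lq_bijective : Function.Bijective Lq := by
  constructor
  · -- injective
    rw [injective_iff_map_eq_zero]
    intro co hco
    have hmem : L0 co ∈ I := by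
      have : Ideal.Quotient.mk I (L0 co) = 0 := hco
      rwa [Ideal.Quotient.eq_zero_iff_mem] at this
    -- convert attach-sum to plain sum with extended coefficients
    set co' : ℕ × ℕ → ℂ := fun p => if h : p ∈ Bset then co ⟨p, h⟩ else 0 with hco'
    have hsum : L0 co = ∑ p ∈ Bset, co' p • Mo p.1 p.2 := by
      show (∑ p ∈ Bset.attach, co p • Mo p.1.1 p.1.2) = _
      rw [← Finset.sum_attach Bset (fun p => co' p • Mo p.1 p.2)]
      apply Finset.sum_congr rfl
      intro p _
      simp [hco', p.2]
    have hz := injective_core co' (by rwa [← hsum])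
    funext p
    have := hz p.1 p.2
    simpa [hco', p.2] using this
  · -- surjective
    intro x
    obtain ⟨z, rfl⟩ := Ideal.Quotient.mk_surjective x
    obtain ⟨w, hwI, hvan⟩ := reduce z
    refine ⟨fun p => c p.1.1 p.1.2 (z - w), ?_⟩
    have hb : z - w = ∑ p ∈ Bset, (c p.1 p.2 (z - w)) • Mo p.1 p.2 := sum_basis (z - w) hvan
    have hL0 : L0 (fun p => c p.1.1 p.1.2 (z - w)) = z - w := by
      show (∑ p ∈ Bset.attach, c p.1.1 p.1.2 (z - w) • Mo p.1.1 p.1.2) = z - w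
      conv_rhs => rw [hb]
      exact Finset.sum_attach Bset (fun p => (c p.1 p.2 (z - w)) • Mo p.1 p.2)
    show Ideal.Quotient.mk I (L0 _) = Ideal.Quotient.mk I z
    rw [hL0]
    rw [Ideal.Quotient.mk_eq_mk_iff_sub_mem]
    simpa using neg_mem hwI

lemma finrank_RI : Module.finrank ℂ (R2 ⧸ I) = 59 := by
  have e : (↥Bset → ℂ) ≃ₗ[ℂ] (R2 ⧸ I) := LinearEquiv.ofBijective Lq Lq_bijective
  rw [← e.finrank_eq, Module.finrank_pi ℂ, Fintype.card_coe, card_Bset]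

end Tj


/-- The Tjurina number of f = (y³+x⁷)(y³+x¹⁰) equals 59. -/
theorem tjurina_number_example :
    Module.finrank ℂ (R2 ⧸ Ideal.span {fEx, pder 0 fEx, pder 1 fEx}) = 59 := by
  have h : Ideal.span {fEx, pder 0 fEx, pder 1 fEx} = Tj.I := Tj.J_eq_I
  rw [h]
  exact Tj.finrank_RI
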